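/- Suppose P : ℕ → ℝ^N satisfies P(s) = (I_N − C0(0))^{−1}·(δ_{s,0}p0 + (1−δ_{s,0})B0·P(s−1)) for all s ∈ ℕ, with I_N − C0(0) invertible, and suppose every entry of every P(s) lies in [0,1]. Let x ∈ ℝ with |x| < 1 be such that I_N − C0(0) − x·B0 is invertible. Then the series Σ_{s=0}^∞ x^s·P(s) converges absolutely (entrywise) and Σ_{s=0}^∞ x^s·P(s) = (I_N − C0(0) − x·B0)^{−1}·p0. -/
import Mathlib


open Matrix

noncomputable section

/-- The model parameters of the two-strain hospital-ward Markov chain. -/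
structure ModelParams where
  β : ℝ
  μ : ℝ
  γ : ℝ
  τ1 : ℝ
  τ2 : ℝ
  m : ℝ
  c : ℝ

/-- Positivity/range conditions on the parameters. -/
def ModelParams.Valid (π : ModelParams) : Prop :=
  0 < π.β ∧ 0 < π.μ ∧ 0 < π.γ ∧ 0 < π.τ1 ∧ 0 < π.τ2 ∧
    π.m ∈ Set.Ioo (0:ℝ) 1 ∧ π.c ∈ Set.Ioo (0:ℝ) 1

/-- The total exit rate `q(i,j)` of state `(i,j)`. -/
def qr (N : ℕ) (π : ModelParams) (i j : ℕ) : ℝ :=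
  ((N : ℝ) - i) * (((i : ℝ) - j * π.c) * π.β + π.m * π.μ)
    + ((i : ℝ) - j) * (π.γ + π.τ1 + π.τ2 + (1 - π.m) * π.μ)
    + (j : ℝ) * (π.γ + π.τ2 + π.μ)

/-- The matrix `B_j` (Appendix A/B; `B_0` for `j = 0`), 0-based indexing: the 1-based
row index `i` corresponds to `k + 1` for `k : Fin (N - j)`. -/
def Bm (N : ℕ) (π : ModelParams) (j : ℕ) : Matrix (Fin (N - j)) (Fin (N - j)) ℝ :=
  fun k l =>
    if (l : ℕ) = (k : ℕ) then π.m * π.μ / qr N π (j + (k : ℕ) + 1) j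
    else if (l : ℕ) = (k : ℕ) + 1 then
      ((N : ℝ) - j - ((k : ℕ) + 1)) * π.β / qr N π (j + (k : ℕ) + 1) j
    else 0

/-- The matrix `C_j(0)` (Appendix A/B; `C_0(0)` for `j = 0`). -/
def Cm0 (N : ℕ) (π : ModelParams) (j : ℕ) : Matrix (Fin (N - j)) (Fin (N - j)) ℝ :=
  fun k l =>
    if (l : ℕ) + 1 = (k : ℕ) then
      ((k : ℕ) : ℝ) * (π.γ + π.τ1 + π.τ2 + (1 - π.m) * π.μ) / qr N π (j + (k : ℕ) + 1) j
    else if (l : ℕ) = (k : ℕ) then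
      (((N : ℝ) - j - ((k : ℕ) + 1)) * (1 - π.m) * π.μ + ((k : ℕ) : ℝ) * π.m * π.μ)
        / qr N π (j + (k : ℕ) + 1) j
    else if (l : ℕ) = (k : ℕ) + 1 then
      ((N : ℝ) - j - ((k : ℕ) + 1)) * (((k : ℕ) : ℝ) * π.β + π.m * π.μ)
        / qr N π (j + (k : ℕ) + 1) j
    else 0

/-- The matrix `C_{j-1}(1)` (Appendix B), of dimension `(N-j) × (N-(j-1))`. -/
def Cm1 (N : ℕ) (π : ModelParams) (j : ℕ) :
    Matrix (Fin (N - j)) (Fin (N - (j - 1))) ℝ :=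
  fun k l =>
    if (l : ℕ) = (k : ℕ) then
      (j : ℝ) * (π.γ + π.τ2 + (1 - π.m) * π.μ) / qr N π (j + (k : ℕ) + 1) j
    else if (l : ℕ) = (k : ℕ) + 1 then
      (j : ℝ) * π.m * π.μ / qr N π (j + (k : ℕ) + 1) j
    else 0

/-- The matrix `C_{j+1}(2)` (Appendix B), of dimension `(N-j) × (N-(j+1))`. -/
def Cm2 (N : ℕ) (π : ModelParams) (j : ℕ) :
    Matrix (Fin (N - j)) (Fin (N - (j + 1))) ℝ :=
  fun k l =>
    if (l : ℕ) = (k : ℕ) then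
      ((N : ℝ) - j - ((k : ℕ) + 1)) * j * (1 - π.c) * π.β / qr N π (j + (k : ℕ) + 1) j
    else 0

/-- The vector `p_{j,1_S}` (Appendix A/B). -/
def pS (N : ℕ) (π : ModelParams) (j : ℕ) : Fin (N - j) → ℝ :=
  fun k => (π.γ + π.τ1 + π.τ2 + (1 - π.m) * π.μ) / qr N π (j + (k : ℕ) + 1) j

/-- The matrix `E_j` (Appendix C), diagonal, of dimension `(N-j+1) × (N-(j-1))`;
the 1-based row index `k` corresponds to state `(j-1+k, j)`. -/
def Em (N : ℕ) (π : ModelParams) (j : ℕ) :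
    Matrix (Fin (N - j + 1)) (Fin (N - (j - 1))) ℝ :=
  fun k l =>
    if (l : ℕ) = (k : ℕ) then π.m * π.μ / qr N π (j + (k : ℕ)) j else 0

/-- The matrix `F_j` (Appendix C), of dimension `(N-j+1) × (N-j)`. -/
def Fm (N : ℕ) (π : ModelParams) (j : ℕ) :
    Matrix (Fin (N - j + 1)) (Fin (N - (j + 1) + 1)) ℝ :=
  fun k l =>
    if (l : ℕ) = (k : ℕ) then
      ((N : ℝ) - j - (k : ℕ)) * (1 - π.c) * π.β / qr N π (j + (k : ℕ)) j
    else 0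

/-- The matrix `D_j(0)` (Appendix C). -/
def Dm0 (N : ℕ) (π : ModelParams) (j : ℕ) :
    Matrix (Fin (N - j + 1)) (Fin (N - j + 1)) ℝ :=
  fun k l =>
    if (l : ℕ) + 1 = (k : ℕ) then
      ((k : ℕ) : ℝ) * (π.γ + π.τ1 + π.τ2 + (1 - π.m) * π.μ) / qr N π (j + (k : ℕ)) j
    else if (l : ℕ) = (k : ℕ) then
      (((N : ℝ) - j - (k : ℕ)) * (1 - π.m) * π.μ + ((k : ℕ) : ℝ) * π.m * π.μ)
        / qr N π (j + (k : ℕ)) j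
    else if (l : ℕ) = (k : ℕ) + 1 then
      ((N : ℝ) - j - (k : ℕ)) * (((k : ℕ) : ℝ) * π.β + π.m * π.μ) / qr N π (j + (k : ℕ)) j
    else 0

/-- The matrix `D_{j-1}(1)` (Appendix C), of dimension `(N-j+1) × (N-j+2)`. -/
def Dm1 (N : ℕ) (π : ModelParams) (j : ℕ) :
    Matrix (Fin (N - j + 1)) (Fin (N - (j - 1) + 1)) ℝ :=
  fun k l =>
    if (l : ℕ) = (k : ℕ) then
      ((j : ℝ) - 1) * (π.γ + π.τ2 + (1 - π.m) * π.μ) / qr N π (j + (k : ℕ)) j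
    else if (l : ℕ) = (k : ℕ) + 1 then
      ((j : ℝ) - 1) * π.m * π.μ / qr N π (j + (k : ℕ)) j
    else 0

/-- The matrix `D_{j+1}(2)` (Appendix C), of dimension `(N-j+1) × (N-j)`. -/
def Dm2 (N : ℕ) (π : ModelParams) (j : ℕ) :
    Matrix (Fin (N - j + 1)) (Fin (N - (j + 1) + 1)) ℝ :=
  fun k l =>
    if (l : ℕ) = (k : ℕ) then
      ((N : ℝ) - j - (k : ℕ)) * ((j : ℝ) - 1) * (1 - π.c) * π.β / qr N π (j + (k : ℕ)) j
    else 0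

/-- The vector `p_{j,1_R}` (Section 3.2). -/
def pR (N : ℕ) (π : ModelParams) (j : ℕ) : Fin (N - j + 1) → ℝ :=
  fun k => (π.γ + π.τ2 + (1 - π.m) * π.μ) / qr N π (j + (k : ℕ)) j

/-- The `1S` first-step system (equations (1)–(4) of the paper) for the family of
conditional-probability vectors `P j s = P_{j,1_S}(s)`, `0 ≤ j ≤ N−1`. -/
def OneSSystem (N : ℕ) (π : ModelParams)
    (P : (j : ℕ) → ℕ → Fin (N - j) → ℝ) : Prop :=
  IsUnit (1 - Cm0 N π 0) ∧
  (∀ s : ℕ, P 0 s = (1 - Cm0 N π 0)⁻¹.mulVec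
      (if s = 0 then pS N π 0 else (Bm N π 0).mulVec (P 0 (s - 1)))) ∧
  (∀ j s : ℕ, j + 1 ≤ N - 1 →
    P (j + 1) s
      = (if s = 0 then pS N π (j + 1) else (Bm N π (j + 1)).mulVec (P (j + 1) (s - 1)))
        + (Cm1 N π (j + 1)).mulVec (P j s)
        + (if j + 1 = N - 1 then 0 else
            (Cm0 N π (j + 1)).mulVec (P (j + 1) s)
              + (Cm2 N π (j + 1)).mulVec (P (j + 2) s)))

/-- The `(·,0)`-system (Theorem 2 of the paper) for the vectors
`PR j s = P_{j,1_R}(s,0)`, `1 ≤ j ≤ N`, coupled with a `1S` family `P`. -/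
def RZeroSystem (N : ℕ) (π : ModelParams)
    (P : (j : ℕ) → ℕ → Fin (N - j) → ℝ)
    (PR : (j : ℕ) → ℕ → Fin (N - j + 1) → ℝ) : Prop :=
  (∀ s : ℕ, PR 1 s = (Dm0 N π 1).mulVec (PR 1 s)
      + (if s = 0 then pR N π 1 else (Em N π 1).mulVec (P 0 (s - 1)))) ∧
  (∀ j s : ℕ, 1 ≤ j → j + 1 ≤ N →
    PR (j + 1) s
      = (if s = 0 then pR N π (j + 1) else (Em N π (j + 1)).mulVec (P j (s - 1)))
        + (Dm1 N π (j + 1)).mulVec (PR j s)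
        + (if j + 1 = N then 0 else
            (Dm0 N π (j + 1)).mulVec (PR (j + 1) s)
              + (Dm2 N π (j + 1)).mulVec (PR (j + 2) s)))

/-- The `(·,r)`-system for `r ≥ 1` (Theorem 3 of the paper) for the vectors
`PR j s r = P_{j,1_R}(s,r)`, `1 ≤ j ≤ N`. -/
def RPosSystem (N : ℕ) (π : ModelParams)
    (PR : (j : ℕ) → ℕ → ℕ → Fin (N - j + 1) → ℝ) : Prop :=
  (∀ s r : ℕ, PR 1 s (r + 1) = (Dm0 N π 1).mulVec (PR 1 s (r + 1))
      + (Fm N π 1).mulVec (PR 2 s r)) ∧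
  (∀ j s r : ℕ, 1 ≤ j → j + 1 ≤ N →
    PR (j + 1) s (r + 1)
      = (if j + 1 = N then 0 else (Fm N π (j + 1)).mulVec (PR (j + 2) s r))
        + (Dm1 N π (j + 1)).mulVec (PR j s (r + 1))
        + (if j + 1 = N then 0 else
            (Dm0 N π (j + 1)).mulVec (PR (j + 1) s (r + 1))
              + (Dm2 N π (j + 1)).mulVec (PR (j + 2) s (r + 1))))

private lemma summable_mulVec_aux {n : Type*} [Fintype n] (M : Matrix n n ℝ)
    (w : ℕ → n → ℝ) (hw : ∀ j, Summable (fun s => w s j)) (i : n) :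
    Summable (fun s => M.mulVec (w s) i) := by
  simp only [Matrix.mulVec, dotProduct]
  exact (hasSum_sum (fun j (_ : j ∈ Finset.univ) => ((hw j).mul_left (M i j)).hasSum)).summable

private lemma tsum_mulVec_aux {n : Type*} [Fintype n] (M : Matrix n n ℝ)
    (w : ℕ → n → ℝ) (hw : ∀ j, Summable (fun s => w s j)) (i : n) :
    M.mulVec (fun j => ∑' s, w s j) i = ∑' s, M.mulVec (w s) i := by
  simp only [Matrix.mulVec, dotProduct]
  calc (∑ j, M i j * ∑' s, w s j) = ∑ j, ∑' s, M i j * w s j := by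
        refine Finset.sum_congr rfl fun j _ => ?_
        exact (tsum_mul_left).symm
    _ = ∑' s, ∑ j, M i j * w s j := (Summable.tsum_finsetSum (fun j _ => (hw j).mul_left _)).symm

/-- If `P : ℕ → ℝ^N` satisfies
`P(s) = (I − C₀(0))⁻¹(δ_{s,0} p₀ + (1−δ_{s,0}) B₀ P(s−1))` with all entries in `[0,1]`,
then for `|x| < 1` with `I − C₀(0) − x B₀` invertible the generating series converges
absolutely entrywise and `Σ_{s≥0} xˢ P(s) = (I − C₀(0) − x B₀)⁻¹ p₀`. -/
theorem generating_function_level_zero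
    (N : ℕ) (hN : 2 ≤ N) (π : ModelParams) (hπ : π.Valid)
    (P : ℕ → Fin N → ℝ)
    (hC0inv : IsUnit (1 - Cm0 N π 0))
    (hP : ∀ s : ℕ, P s = (1 - Cm0 N π 0)⁻¹.mulVec
      (if s = 0 then pS N π 0 else (Bm N π 0).mulVec (P (s - 1))))
    (hbound : ∀ (s : ℕ) (i : Fin N), P s i ∈ Set.Icc (0:ℝ) 1)
    (x : ℝ) (hx : |x| < 1)
    (hxinv : IsUnit (1 - Cm0 N π 0 - x • Bm N π 0)) :
    (∀ i : Fin N, Summable (fun s : ℕ => |x ^ s * P s i|)) ∧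
    (∀ i : Fin N,
      (∑' s : ℕ, x ^ s * P s i)
        = (1 - Cm0 N π 0 - x • Bm N π 0)⁻¹.mulVec (pS N π 0) i) := by
  classical
  have hxnn : (0:ℝ) ≤ |x| := abs_nonneg x
  have habs : ∀ i : Fin N, Summable (fun s : ℕ => |x ^ s * P s i|) := by
    intro i
    refine Summable.of_nonneg_of_le (fun s => abs_nonneg _) (fun s => ?_)
      (summable_geometric_of_lt_one hxnn hx)
    rw [abs_mul, abs_pow]
    calc |x| ^ s * |P s i| ≤ |x| ^ s * 1 := by
          gcongr
          rcases hbound s i with ⟨h0, h1⟩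
          rw [abs_of_nonneg h0]; exact h1
      _ = |x| ^ s := mul_one _
  have hsum : ∀ i : Fin N, Summable (fun s : ℕ => x ^ s * P s i) :=
    fun i => (habs i).of_abs
  refine ⟨habs, ?_⟩
  set A : Matrix (Fin (N - 0)) (Fin (N - 0)) ℝ := 1 - Cm0 N π 0 with hAdef
  set B : Matrix (Fin (N - 0)) (Fin (N - 0)) ℝ := Bm N π 0 with hBdef
  have hAdet : IsUnit A.det := (Matrix.isUnit_iff_isUnit_det _).mp hC0inv
  have hAP0 : A.mulVec (P 0) = pS N π 0 := by
    rw [hP 0]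
    simp only [↓reduceIte]
    rw [Matrix.mulVec_mulVec, Matrix.mul_nonsing_inv _ hAdet, Matrix.one_mulVec]
  have hAPs : ∀ s : ℕ, A.mulVec (P (s + 1)) = B.mulVec (P s) := by
    intro s
    rw [hP (s + 1)]
    simp only [Nat.succ_ne_zero, if_false, Nat.add_sub_cancel]
    rw [Matrix.mulVec_mulVec, Matrix.mul_nonsing_inv _ hAdet, Matrix.one_mulVec]
  set S : Fin N → ℝ := fun i => ∑' s : ℕ, x ^ s * P s i with hSdef
  have hw : ∀ j : Fin N, Summable (fun s : ℕ => (x ^ s • P s) j) := by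
    intro j
    simpa [Pi.smul_apply, smul_eq_mul] using hsum j
  have hSeq : S = fun j => ∑' s : ℕ, (x ^ s • P s) j := by
    funext j
    simp [hSdef, Pi.smul_apply, smul_eq_mul]
  have key : (A - x • B).mulVec S = pS N π 0 := by
    funext i
    rw [Matrix.sub_mulVec, Matrix.smul_mulVec]
    simp only [Pi.sub_apply, Pi.smul_apply, smul_eq_mul]
    have hAS : A.mulVec S i = ∑' s : ℕ, x ^ s * A.mulVec (P s) i := by
      refine (tsum_mulVec_aux A (fun s => x ^ s • P s) hw i).trans ?_
      congr 1; funext s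
      rw [Matrix.mulVec_smul]
      simp [smul_eq_mul]
    have hBS : B.mulVec S i = ∑' s : ℕ, x ^ s * B.mulVec (P s) i := by
      refine (tsum_mulVec_aux B (fun s => x ^ s • P s) hw i).trans ?_
      congr 1; funext s
      rw [Matrix.mulVec_smul]
      simp [smul_eq_mul]
    have hsumA : Summable (fun s : ℕ => x ^ s * A.mulVec (P s) i) := by
      have := summable_mulVec_aux A _ hw i
      refine this.congr fun s => ?_
      rw [Matrix.mulVec_smul]; simp [smul_eq_mul]
    have hsumB : Summable (fun s : ℕ => x ^ s * B.mulVec (P s) i) := by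
      have := summable_mulVec_aux B _ hw i
      refine this.congr fun s => ?_
      rw [Matrix.mulVec_smul]; simp [smul_eq_mul]
    rw [hAS, hBS]
    rw [Summable.tsum_eq_zero_add hsumA]
    have hshift : (∑' s : ℕ, x ^ (s + 1) * A.mulVec (P (s + 1)) i)
        = x * ∑' s : ℕ, x ^ s * B.mulVec (P s) i := by
      rw [← tsum_mul_left]
      congr 1; funext s
      rw [hAPs s, pow_succ]
      ring
    rw [hshift, hAP0]
    ring
  have hdet : IsUnit (A - x • B).det := (Matrix.isUnit_iff_isUnit_det _).mp hxinv
  have : S = (A - x • B)⁻¹.mulVec (pS N π 0) := by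
    rw [← key, Matrix.mulVec_mulVec, Matrix.nonsing_inv_mul _ hdet, Matrix.one_mulVec]
  intro i
  have := congrFun this i
  simpa [hSdef, hAdef, hBdef, sub_sub] using this
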